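/- Under the Markov dynamics above with (V,C) strongly connected, |V| = N > 1, a a proper coloring of the underlying undirected graph G (where C is a sensing sub-relation of G covering each undirected edge in at least one direction), x(0) not satisfying, F(0) = {i : x_i(0) = a_i}, U(0) the unsatisfied set: if U(0) ⊆ F(0), then with probability at least γ^{N^3}, within at most N^2 steps the process reaches x(t̃) with F(t̃) ⊋ F(0) and |F(t̃)| = |F(0)| + 1. -/

import Mathlib

open MeasureTheory

/-- A vertex `i` is unsatisfied under assignment `x` (w.r.t. sensing edges `C`)
iff some sensed in-neighbor shares its color. -/
def CFLUnsat {V D : Type*} (C : Set (V × V)) (x : V → D) (i : V) : Prop :=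
  ∃ j, (j, i) ∈ C ∧ x j = x i

lemma chain_dedup {α : Type*} {r : α → α → Prop} :
    ∀ (n : ℕ) (a b : α) (l : List α), l.length ≤ n → a ≠ b →
    List.Chain r a l → l.getLast? = some b →
    ∃ l' : List α, l' ≠ [] ∧ List.Chain r a l' ∧ l'.getLast? = some b ∧
      (a :: l').Nodup ∧ ∀ x ∈ l', x ∈ l := by
  intro n
  induction n with
  | zero =>
    intro a b l hl _ _ hlast
    interval_cases hl' : l.length
    · rw [List.length_eq_zero_iff] at hl'; subst hl'; simp at hlast
  | succ n ih =>
    intro a b l hl hab hc hlast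
    by_cases ha : a ∈ l
    · obtain ⟨s, t, rfl⟩ := List.append_of_mem ha
      have hct : List.Chain r a t := by
        have h1 : List.Chain' r (a :: (s ++ a :: t)) := hc
        have h2 : (a :: t) <:+ (a :: (s ++ a :: t)) :=
          (List.suffix_append s (a :: t)).trans ((s ++ a :: t).suffix_cons a)
        exact h1.suffix h2
      have htne : t ≠ [] := by
        rintro rfl
        rw [List.getLast?_concat] at hlast
        exact hab (Option.some_inj.mp hlast)
      have hlt : t.getLast? = some b := by
        rw [List.getLast?_eq_getLast_of_ne_nil htne]
        have : (s ++ a :: t).getLast? = some (t.getLast htne) := by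
          rw [List.append_cons, List.getLast?_append_of_ne_nil _ htne,
            List.getLast?_eq_getLast_of_ne_nil htne]
        rw [this] at hlast
        exact hlast
      have hlen : t.length ≤ n := by
        have := List.length_append (as := s) (bs := a :: t)
        simp at this hl; omega
      obtain ⟨l', h1, h2, h3, h4, h5⟩ := ih a b t hlen hab hct hlt
      exact ⟨l', h1, h2, h3, h4, fun x hx => by
        simp only [List.mem_append, List.mem_cons]; exact Or.inr (Or.inr (h5 x hx))⟩
    · rcases l with _ | ⟨x, t⟩
      · simp at hlast
      · have hc : List.IsChain r (a :: x :: t) := hc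
        rw [List.isChain_cons_cons] at hc
        obtain ⟨hax, hct⟩ := hc
        have hanx : a ≠ x := fun h => ha (h ▸ (List.mem_cons_self : x ∈ x :: t))
        by_cases hxb : x = b
        · subst hxb
          exact ⟨[x], by simp, by show List.IsChain r [a, x]; simp [hax], by simp, by simp [hanx],
            fun y hy => by simp at hy; simp [hy]⟩
        · have htne : t ≠ [] := by
            rintro rfl; simp at hlast; exact hxb hlast
          have hlt : t.getLast? = some b := by
            rcases t with _ | ⟨y, t'⟩
            · exact absurd rfl htne
            · rwa [List.getLast?_cons_cons] at hlast
          have hlen : t.length ≤ n := by simp at hl; omega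
          obtain ⟨l', h1, h2, h3, h4, h5⟩ := ih x b t hlen hxb hct hlt
          refine ⟨x :: l', by simp, List.chain_cons.mpr ⟨hax, h2⟩, ?_, ?_, ?_⟩
          · rcases l' with _ | ⟨z, l''⟩
            · exact absurd rfl h1
            · rwa [List.getLast?_cons_cons]
          · refine List.nodup_cons.mpr ⟨?_, h4⟩
            simp only [List.mem_cons]
            rintro (rfl | hal')
            · exact hanx rfl
            · exact ha (List.mem_cons.mpr (Or.inr (h5 a hal')))
          · intro y hy
            rcases List.mem_cons.mp hy with rfl | hy'
            · exact List.mem_cons_self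
            · exact List.mem_cons.mpr (Or.inr (h5 y hy'))

lemma exists_nodup_chain {α : Type*} {r : α → α → Prop} {a b : α} (hab : a ≠ b)
    (h : Relation.ReflTransGen r a b) :
    ∃ l : List α, l ≠ [] ∧ List.Chain r a l ∧ l.getLast? = some b ∧ (a :: l).Nodup := by
  obtain ⟨l, hc, hl⟩ := List.exists_isChain_cons_of_relationReflTransGen h
  have hne : l ≠ [] := by rintro rfl; exact hab hl
  have hlast : l.getLast? = some b := by
    rw [List.getLast?_eq_getLast_of_ne_nil hne]
    rw [List.getLast_cons hne] at hl
    exact congrArg some hl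
  obtain ⟨l', h1, h2, h3, h4, _⟩ := chain_dedup l.length a b l le_rfl hab hc hlast
  exact ⟨l', h1, h2, h3, h4⟩

lemma trajectory {V D : Type*} [Fintype V] [DecidableEq V] (C : Set (V × V)) (x0 : V → D)
    (v w : V) (hvw : v ≠ w) (hwv : (w, v) ∈ C) (hxw : x0 w = x0 v)
    (hpath : Relation.ReflTransGen (fun p q => (p, q) ∈ C) v w) (aw : D) :
    ∃ T : ℕ, 0 < T ∧ T ≤ (Fintype.card V) ^ 2 ∧ ∃ h : ℕ → V → D,
      h 0 = x0 ∧ (∀ t i, ¬ CFLUnsat C (h t) i → h (t + 1) i = h t i) ∧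
      h T = fun u => if u = w then aw else x0 u := by
  obtain ⟨l, hlne, hchain, hlast, hnodup⟩ := exists_nodup_chain hvw hpath
  set p : List V := v :: l with hp
  have hpne : p ≠ [] := List.cons_ne_nil _ _
  set L : ℕ := p.length with hLdef
  have hLl : L = l.length + 1 := by rw [hLdef, hp, List.length_cons]
  have hL2 : 2 ≤ L := by
    have : 1 ≤ l.length := List.length_pos_iff.mpr hlne
    omega
  set P : ℕ := L - 1 with hPdef
  have hLP : L = P + 1 := by omega
  have hP1 : 1 ≤ P := by omega
  set z : ℕ → V := fun n => p.getD n v with hzdef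
  have hzget : ∀ m, (hm : m < L) → z m = p[m] := by
    intro m hm
    rw [hzdef]
    exact List.getD_eq_getElem p v (by omega)
  have hz0 : z 0 = v := rfl
  have hzL : z (L - 1) = w := by
    have hgl : p.getLast hpne = w := by
      have h3 : (v :: l).getLast (List.cons_ne_nil v l) = l.getLast hlne :=
        List.getLast_cons hlne
      have h2 := List.getLast?_eq_getLast_of_ne_nil hlne
      rw [h2] at hlast
      exact h3.trans (Option.some_inj.mp hlast)
    rw [hzget (L - 1) (by omega)]
    rw [List.getLast_eq_getElem] at hgl
    convert hgl using 2
  have hmem : ∀ m, (hm : m < L) → z m ∈ p := by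
    intro m hm
    rw [hzget m hm]
    exact List.getElem_mem _
  have hidx : ∀ m, (hm : m < L) → p.idxOf (z m) = m := by
    intro m hm
    have hlt : p.idxOf (z m) < p.length := List.idxOf_lt_length_iff.mpr (hmem m hm)
    have h1 : p[p.idxOf (z m)] = z m := List.getElem_idxOf hlt
    exact (List.Nodup.getElem_inj_iff hnodup).mp (h1.trans (hzget m hm))
  have hedge : ∀ m, m + 1 < L → (z m, z (m + 1)) ∈ C := by
    intro m hm
    have hc' : List.IsChain (fun p q => (p, q) ∈ C) p := hchain
    rw [List.isChain_iff_getElem] at hc'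
    rw [hzget m (by omega), hzget (m + 1) hm]
    exact hc' m hm
  have hCz : (z (L - 1), z 0) ∈ C := by rw [hzL, hz0]; exact hwv
  -- the color rotation
  set b : ℕ → D := fun n => x0 (z (n % P)) with hbdef
  set g : ℕ → V → D := fun t u =>
    if u ∈ p then b (p.idxOf u + t / L + (if p.idxOf u < t % L then 1 else 0)) else x0 u
    with hgdef
  have hgz : ∀ t m, (hm : m < L) →
      g t (z m) = b (m + t / L + (if m < t % L then 1 else 0)) := by
    intro t m hm
    simp only [hgdef]
    rw [if_pos (hmem m hm), hidx m hm]
  have hgo : ∀ t u, u ∉ p → g t u = x0 u := by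
    intro t u hu
    simp only [hgdef]
    rw [if_neg hu]
  have hdiv : ∀ j i : ℕ, i < L → (L * j + i) / L = j ∧ (L * j + i) % L = i := by
    intro j i hi
    constructor
    · rw [Nat.mul_add_div (by omega), Nat.div_eq_of_lt hi, add_zero]
    · rw [Nat.mul_add_mod, Nat.mod_eq_of_lt hi]
  have hself : ∀ t : ℕ, L * (t / L) + t % L = t := fun t => Nat.div_add_mod t L
  have hmodL : ∀ t : ℕ, t % L < L := fun t => Nat.mod_lt _ (by omega)
  -- transition: only z (t % L) changes from g t to g (t+1)
  have htrans : ∀ t u, u ≠ z (t % L) → g (t + 1) u = g t u := by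
    intro t u hu
    by_cases hup : u ∈ p
    · have hm : p.idxOf u < L := by
        rw [hLdef]; exact List.idxOf_lt_length_iff.mpr hup
      have hzm : z (p.idxOf u) = u := by
        rw [hzget _ hm]
        exact List.getElem_idxOf (by rw [← hLdef]; exact hm)
      have hmne : p.idxOf u ≠ t % L := fun h => hu (by rw [← hzm, h])
      rw [← hzm, hgz (t + 1) _ hm, hgz t _ hm]
      have hiL : t % L < L := hmodL t
      rcases lt_or_eq_of_le (Nat.succ_le_of_lt hiL) with h1 | h1
      · -- t % L + 1 < L
        have ht1 : t + 1 = L * (t / L) + (t % L + 1) := by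
          have := hself t; omega
        have hd := hdiv (t / L) (t % L + 1) h1
        rw [← ht1] at hd
        rw [hd.1, hd.2]
        by_cases hlt : p.idxOf u < t % L
        · rw [if_pos hlt, if_pos (by omega)]
        · rw [if_neg hlt, if_neg (by omega)]
      · -- t % L + 1 = L
        have hdist : L * (t / L + 1) = L * (t / L) + L := by ring
        have ht1 : t + 1 = L * (t / L + 1) + 0 := by
          have := hself t; omega
        have hd := hdiv (t / L + 1) 0 (by omega)
        rw [← ht1] at hd
        rw [hd.1, hd.2]
        rw [if_neg (by omega : ¬ p.idxOf u < 0), if_pos (by omega : p.idxOf u < t % L)]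
        have e : p.idxOf u + (t / L + 1) + 0 = p.idxOf u + t / L + 1 := by omega
        rw [e]
    · rw [hgo (t + 1) u hup, hgo t u hup]
  -- the mover is unsatisfied
  have hunsat : ∀ t, CFLUnsat C (g t) (z (t % L)) := by
    intro t
    have hiL : t % L < L := hmodL t
    rcases Nat.eq_zero_or_pos (t % L) with h0 | hpos
    · refine ⟨z (L - 1), by rw [h0]; exact hCz, ?_⟩
      rw [hgz t (L - 1) (by omega), hgz t (t % L) hiL, h0]
      rw [if_neg (by omega : ¬ L - 1 < 0), if_neg (by omega : ¬ (0:ℕ) < 0)]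
      simp only [hbdef]
      have e : (L - 1 + t / L + 0) % P = (0 + t / L + 0) % P := by
        rw [show L - 1 + t / L + 0 = P + t / L from by omega,
          show 0 + t / L + 0 = t / L from by omega, Nat.add_mod_left]
      rw [e]
    · obtain ⟨i', hi'⟩ : ∃ i', t % L = i' + 1 := ⟨t % L - 1, by omega⟩
      refine ⟨z i', by rw [hi']; exact hedge i' (by omega), ?_⟩
      rw [hgz t i' (by omega), hgz t (t % L) hiL, hi']
      rw [if_pos (by omega : i' < i' + 1), if_neg (by omega : ¬ i' + 1 < i' + 1)]
      have e : i' + t / L + 1 = i' + 1 + t / L + 0 := by omega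
      rw [e]
  -- package
  refine ⟨P * L, Nat.mul_pos (by omega) (by omega), ?_, ?_⟩
  · have hcard : L ≤ Fintype.card V := by
      rw [hLdef]; exact List.Nodup.length_le_card hnodup
    calc P * L ≤ Fintype.card V * Fintype.card V :=
          Nat.mul_le_mul (by omega) hcard
      _ = (Fintype.card V) ^ 2 := (pow_two _).symm
  set y : V → D := fun u => if u = w then aw else x0 u with hydef
  set h : ℕ → V → D := fun t => if t < P * L then g t else y with hhdef
  have hTpos : 0 < P * L := Nat.mul_pos (by omega) (by omega)
  refine ⟨h, ?_, ?_, ?_⟩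
  · -- h 0 = x0
    funext u
    simp only [hhdef, if_pos hTpos]
    by_cases hup : u ∈ p
    · have hm : p.idxOf u < L := by
        rw [hLdef]; exact List.idxOf_lt_length_iff.mpr hup
      have hzm : z (p.idxOf u) = u := by
        rw [hzget _ hm]
        exact List.getElem_idxOf (by rw [← hLdef]; exact hm)
      rw [← hzm, hgz 0 _ hm]
      rw [Nat.zero_div, Nat.zero_mod, if_neg (by omega : ¬ p.idxOf u < 0)]
      simp only [hbdef]
      rcases Nat.lt_or_ge (p.idxOf u) P with hmP | hmP
      · rw [show p.idxOf u + 0 + 0 = p.idxOf u from by omega, Nat.mod_eq_of_lt hmP, hzm]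
      · have hmP' : p.idxOf u = P := by omega
        rw [show p.idxOf u + 0 + 0 = p.idxOf u from by omega, hmP', Nat.mod_self, hz0]
        rw [hPdef, hzL]
        exact hxw.symm
    · exact hgo 0 u hup
  · -- step condition
    intro t i hns
    rcases lt_trichotomy (t + 1) (P * L) with h1 | h1 | h1
    · have ht : t < P * L := by omega
      simp only [hhdef, if_pos ht, if_pos h1] at hns ⊢
      by_cases hiz : i = z (t % L)
      · exact absurd (hiz ▸ hunsat t) hns
      · exact htrans t i hiz
    · have ht : t < P * L := by omega
      simp only [hhdef, if_pos ht, if_neg (by omega : ¬ t + 1 < P * L)] at hns ⊢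
      have hc : P * L = L * P := Nat.mul_comm P L
      have e1 : L * (P - 1) + L = L * P := by
        have h2 : P - 1 + 1 = P := by omega
        calc L * (P - 1) + L = L * (P - 1 + 1) := by ring
          _ = L * P := by rw [h2]
      have ht' : t = L * (P - 1) + (L - 1) := by omega
      have hd := hdiv (P - 1) (L - 1) (by omega)
      rw [← ht'] at hd
      by_cases hiz : i = z (t % L)
      · exact absurd (hiz ▸ hunsat t) hns
      · have hiw : i ≠ w := by rw [← hzL, ← hd.2]; exact hiz
        simp only [hydef, if_neg hiw]
        by_cases hup : i ∈ p
        · have hm : p.idxOf i < L := by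
            rw [hLdef]; exact List.idxOf_lt_length_iff.mpr hup
          have hzm : z (p.idxOf i) = i := by
            rw [hzget _ hm]
            exact List.getElem_idxOf (by rw [← hLdef]; exact hm)
          have hmL : p.idxOf i ≠ L - 1 := by
            intro hc2
            exact hiw (by rw [← hzm, hc2, hzL])
          conv_rhs => rw [← hzm]
          rw [hgz t _ hm, hd.1, hd.2, if_pos (by omega : p.idxOf i < L - 1)]
          simp only [hbdef]
          rw [show p.idxOf i + (P - 1) + 1 = p.idxOf i + P from by omega,
            Nat.add_mod_right, Nat.mod_eq_of_lt (by omega : p.idxOf i < P), hzm]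
        · exact (hgo t i hup).symm
    · simp only [hhdef, if_neg (by omega : ¬ t < P * L),
        if_neg (by omega : ¬ t + 1 < P * L)]
  · -- h T = y
    show (if P * L < P * L then g (P * L) else y) = _
    rw [if_neg (lt_irrefl (P * L))]

/-- Lemma 3: Under CFL dynamics with strongly connected sensing graph
`(V,C)`, `|V| = N > 1`, target proper coloring `a` of `G = (V,M)`, `C ⊆ M` covering
each edge in one direction, and `x0` not a proper coloring: if `U(0) ⊆ F(0)`, then
with probability at least `γ^(N^3)`, within at most `N^2` steps the chain reaches `y`
with `F(x0) ⊊ F(y)` and `|F(y)| = |F(x0)| + 1`. -/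
theorem grow_target_set_by_one_prob {V D : Type*} [Fintype V] [Fintype D]
    (M C : Set (V × V))
    (hsym : ∀ i j : V, (i, j) ∈ M → (j, i) ∈ M)
    (hirr : ∀ i : V, (i, i) ∉ M)
    (hsub : C ⊆ M)
    (hcov : ∀ i j : V, (i, j) ∈ M → (i, j) ∈ C ∨ (j, i) ∈ C)
    (hconn : ∀ u v : V, u ≠ v → Relation.ReflTransGen (fun p q => (p, q) ∈ C) u v)
    (hcard : 1 < Fintype.card V)
    {Ω : Type*} [MeasurableSpace Ω]
    (μ : Measure Ω) [IsProbabilityMeasure μ]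
    (X : ℕ → Ω → V → D) (γ : ℝ) (hγ : γ ∈ Set.Ioc (0 : ℝ) 1)
    (hstep : ∀ (t : ℕ) (h : ℕ → V → D),
      (∀ i : V, ¬ CFLUnsat C (h t) i → h (t + 1) i = h t i) →
      γ ^ (Nat.card {i : V // CFLUnsat C (h t) i}) * (μ {ω | ∀ s ≤ t, X s ω = h s}).toReal
        ≤ (μ {ω | ∀ s ≤ t + 1, X s ω = h s}).toReal)
    (a : V → D) (hproper : ∀ i j : V, (i, j) ∈ M → a i ≠ a j)
    (x0 : V → D) (hx0 : ∃ i j : V, (i, j) ∈ M ∧ x0 i = x0 j)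
    (hUF : {i : V | CFLUnsat C x0 i} ⊆ {i : V | x0 i = a i}) :
    ∃ t ≤ (Fintype.card V) ^ 2, ∃ y : V → D,
      {i : V | x0 i = a i} ⊂ {i : V | y i = a i} ∧
      Nat.card {i : V | y i = a i} = Nat.card {i : V | x0 i = a i} + 1 ∧
      γ ^ ((Fintype.card V) ^ 3) * (μ {ω | X 0 ω = x0}).toReal
        ≤ (μ ({ω | X t ω = y} ∩ {ω | X 0 ω = x0})).toReal := by
  classical
  obtain ⟨i0, j0, hM0, hxeq⟩ := hx0
  have hvex : ∃ v, CFLUnsat C x0 v := by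
    rcases hcov i0 j0 hM0 with hc | hc
    · exact ⟨j0, i0, hc, hxeq⟩
    · exact ⟨i0, j0, hc, hxeq.symm⟩
  obtain ⟨v, w, hwv, hxwv⟩ := hvex
  have hvF : x0 v = a v := hUF ⟨w, hwv, hxwv⟩
  have hwvM : (w, v) ∈ M := hsub hwv
  have hvw : v ≠ w := by
    intro h
    subst h
    exact hirr v hwvM
  have hwnF : x0 w ≠ a w := by
    intro hw
    exact hproper w v hwvM (by rw [← hw, ← hvF, hxwv])
  obtain ⟨T, hT0, hTle, h, h0, hcond, hTy⟩ :=
    trajectory C x0 v w hvw hwv hxwv (hconn v w hvw) (a w)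
  set y : V → D := fun u => if u = w then a w else x0 u with hydef
  have hSy : {i : V | y i = a i} = insert w {i : V | x0 i = a i} := by
    ext u
    by_cases hu : u = w
    · subst hu
      simp [hydef]
    · simp [hydef, hu]
  have hwS : w ∉ {i : V | x0 i = a i} := hwnF
  refine ⟨T, hTle, y, ?_, ?_, ?_⟩
  · rw [hSy]
    exact Set.ssubset_insert hwS
  · rw [hSy, Nat.card_coe_set_eq, Nat.card_coe_set_eq,
      Set.ncard_insert_of_notMem hwS (Set.toFinite _)]
  · have hγ0 : (0:ℝ) < γ := hγ.1
    have hγ1 : γ ≤ 1 := hγ.2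
    set cnt : ℕ → ℕ := fun t => Nat.card {i : V // CFLUnsat C (h t) i} with hcnt
    have hchain : ∀ n : ℕ, γ ^ (∑ t ∈ Finset.range n, cnt t) * (μ {ω | X 0 ω = x0}).toReal
        ≤ (μ {ω | ∀ s ≤ n, X s ω = h s}).toReal := by
      intro n
      induction n with
      | zero =>
        have hset : {ω | ∀ s ≤ 0, X s ω = h s} = {ω | X 0 ω = x0} := by
          ext ω
          constructor
          · intro hω
            have := hω 0 le_rfl
            rwa [h0] at this
          · intro hω s hs
            have hs0 : s = 0 := Nat.le_zero.mp hs
            subst hs0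
            rw [h0]
            exact hω
        rw [hset]
        simp
      | succ n ihn =>
        have hs := hstep n h (fun i hi => hcond n i hi)
        calc γ ^ (∑ t ∈ Finset.range (n + 1), cnt t) * (μ {ω | X 0 ω = x0}).toReal
            = γ ^ (cnt n) * (γ ^ (∑ t ∈ Finset.range n, cnt t) * (μ {ω | X 0 ω = x0}).toReal) := by
              rw [Finset.sum_range_succ, pow_add]
              ring
          _ ≤ γ ^ (cnt n) * (μ {ω | ∀ s ≤ n, X s ω = h s}).toReal :=
              mul_le_mul_of_nonneg_left ihn (by positivity)
          _ ≤ (μ {ω | ∀ s ≤ n + 1, X s ω = h s}).toReal := hs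
    have hsum : (∑ t ∈ Finset.range T, cnt t) ≤ (Fintype.card V) ^ 3 := by
      have h1 : ∀ t ∈ Finset.range T, cnt t ≤ Fintype.card V := by
        intro t _
        calc cnt t = Nat.card {i : V // CFLUnsat C (h t) i} := rfl
          _ ≤ Nat.card V := Finite.card_subtype_le _
          _ = Fintype.card V := Nat.card_eq_fintype_card
      calc (∑ t ∈ Finset.range T, cnt t) ≤ T * Fintype.card V := by
            simpa using Finset.sum_le_card_nsmul _ _ _ h1
        _ ≤ (Fintype.card V) ^ 2 * Fintype.card V :=
            Nat.mul_le_mul_right _ hTle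
        _ = (Fintype.card V) ^ 3 := by ring
    have hmono : γ ^ ((Fintype.card V) ^ 3) ≤ γ ^ (∑ t ∈ Finset.range T, cnt t) :=
      pow_le_pow_of_le_one hγ0.le hγ1 hsum
    have hsub2 : {ω | ∀ s ≤ T, X s ω = h s} ⊆ {ω | X T ω = y} ∩ {ω | X 0 ω = x0} := by
      intro ω hω
      refine ⟨?_, ?_⟩
      · show X T ω = y
        rw [hω T le_rfl, hTy]
      · show X 0 ω = x0
        rw [hω 0 (Nat.zero_le _), h0]
    calc γ ^ ((Fintype.card V) ^ 3) * (μ {ω | X 0 ω = x0}).toReal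
        ≤ γ ^ (∑ t ∈ Finset.range T, cnt t) * (μ {ω | X 0 ω = x0}).toReal :=
          mul_le_mul_of_nonneg_right hmono ENNReal.toReal_nonneg
      _ ≤ (μ {ω | ∀ s ≤ T, X s ω = h s}).toReal := hchain T
      _ ≤ (μ ({ω | X T ω = y} ∩ {ω | X 0 ω = x0})).toReal :=
          ENNReal.toReal_mono (measure_ne_top μ _) (measure_mono hsub2)
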